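/- Let $0<a<1$ and $s\ge2$ an integer, and set $\mu = \frac{s^2-3s+2}{6s^2}$. Then $\frac{1}{2}a(1-a)^2 + \mu(1-a)^3 \le \frac{2s^4}{3(2s^2+3s-2)^2}$. -/
import Mathlib


open Finset

/-- Lagrangian polynomial: sum over edges of products of weights. -/
def lagPoly (G : Finset (Finset ℕ)) (x : ℕ → ℝ) : ℝ := ∑ e ∈ G, ∏ i ∈ e, x i

/-- A feasible weight vector on `[n] = {1,…,n}`. -/
def IsFeasible (n : ℕ) (x : ℕ → ℝ) : Prop :=
  (∀ i, 0 ≤ x i) ∧ ∑ i ∈ Finset.Icc 1 n, x i = 1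

/-- Lagrangian of a hypergraph on `[n]`. -/
noncomputable def lag (n : ℕ) (G : Finset (Finset ℕ)) : ℝ :=
  sSup {v : ℝ | ∃ x : ℕ → ℝ, IsFeasible n x ∧ lagPoly G x = v}

/-- `G` is an `r`-graph on the vertex set `{1,…,n}`. -/
def IsGraphOn (n r : ℕ) (G : Finset (Finset ℕ)) : Prop :=
  ∀ e ∈ G, e ⊆ Finset.Icc 1 n ∧ e.card = r

/-- The compression `π_{ij}(G)`: each edge `f ∪ {j}` with `f` avoiding `i,j` and
`f ∪ {i} ∉ G` is replaced by `f ∪ {i}`. -/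
def compress (G : Finset (Finset ℕ)) (i j : ℕ) : Finset (Finset ℕ) :=
  (G.filter fun e => ¬(j ∈ e ∧ i ∉ e ∧ insert i (e.erase j) ∉ G)) ∪
  ((G.filter fun e => j ∈ e ∧ i ∉ e ∧ insert i (e.erase j) ∉ G).image
    fun e => insert i (e.erase j))

/-- `G` contains `t` pairwise disjoint edges. -/
def HasMatching (G : Finset (Finset ℕ)) (t : ℕ) : Prop :=
  ∃ M : Finset (Finset ℕ), M ⊆ G ∧ M.card = t ∧
    (M : Set (Finset ℕ)).Pairwise fun e f => Disjoint e f

/-- `G` contains a complete `r`-graph on `p` vertices. -/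
def HasClique (G : Finset (Finset ℕ)) (p r : ℕ) : Prop :=
  ∃ S : Finset ℕ, S.card = p ∧ ∀ e ⊆ S, e.card = r → e ∈ G



lemma amgm3 (x y : ℝ) (hx : 0 ≤ x) (hy : 0 ≤ y) : 27*(x*x*y) ≤ (2*x+y)^3 := by
  nlinarith [sq_nonneg (x-y), mul_nonneg hx hy, mul_nonneg hx hx, sq_nonneg (x+y)]

lemma key (a c : ℝ) (ha : 0 < a) (ha1 : a < 1) (hc : 0 < c) (hc2 : c ≤ 1/2) :
    (1-a)^2*((1/2-c)+c*a) ≤ 1/(54*c^2) := by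
  have hy : 0 ≤ 2*a + 2*(1/2-c)/c := by
    have := div_nonneg (by linarith : (0:ℝ) ≤ 2*(1/2-c)) hc.le
    rw [mul_div_assoc]; linarith [this, mul_div_assoc 2 (1/2-c) c]
  have h := amgm3 (1-a) (2*a + 2*(1/2-c)/c) (by linarith) hy
  have hcne : c ≠ 0 := ne_of_gt hc
  have h4 : (1-a)*(1-a)*(2*a+2*(1/2-c)/c) = (2/c)*((1-a)^2*((1/2-c)+c*a)) := by
    field_simp; ring
  have h5 : (2*(1-a)+(2*a+2*(1/2-c)/c)) = 1/c := by field_simp; ring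
  rw [h4, h5, div_pow, one_pow] at h
  rw [le_div_iff₀ (by positivity)]
  have h2 := mul_le_mul_of_nonneg_right h (by positivity : (0:ℝ) ≤ c^3)
  rw [div_mul_cancel₀ _ (by positivity : (c:ℝ)^3 ≠ 0)] at h2
  have h3 : 27*(2/c*((1-a)^2*(1/2-c+c*a)))*c^3 = (1-a)^2*(1/2-c+c*a)*(54*c^2) := by
    field_simp; ring
  linarith [h3 ▸ h2]

theorem amgm_optimization_step (a : ℝ) (ha : 0 < a) (ha1 : a < 1)
    (s : ℕ) (hs : 2 ≤ s) :
    (1/2)*a*(1-a)^2 + (((s:ℝ)^2 - 3*(s:ℝ) + 2)/(6*(s:ℝ)^2))*(1-a)^3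
      ≤ 2*(s:ℝ)^4 / (3*(2*(s:ℝ)^2 + 3*(s:ℝ) - 2)^2) := by
  have hs2 : (2:ℝ) ≤ (s:ℝ) := by exact_mod_cast hs
  set t : ℝ := (s:ℝ)
  have ht : 0 < t := by linarith
  have hc : (0:ℝ) < (2*t^2+3*t-2)/(6*t^2) := by
    apply div_pos (by nlinarith) (by positivity)
  have hc2 : (2*t^2+3*t-2)/(6*t^2) ≤ 1/2 := by
    rw [div_le_div_iff₀ (by positivity) (by norm_num)]
    nlinarith
  have h := key a ((2*t^2+3*t-2)/(6*t^2)) ha ha1 hc hc2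
  have htne : t ≠ 0 := ne_of_gt ht
  have hμ : (t^2 - 3*t + 2)/(6*t^2) = 1/2 - (2*t^2+3*t-2)/(6*t^2) := by
    field_simp; ring
  have hr : 1/(54*((2*t^2+3*t-2)/(6*t^2))^2) = 2*t^4 / (3*(2*t^2 + 3*t - 2)^2) := by
    have hN : (2*t^2+3*t-2) ≠ 0 := by nlinarith
    field_simp
    ring
  rw [hμ]
  calc (1/2)*a*(1-a)^2 + (1/2 - (2*t^2+3*t-2)/(6*t^2))*(1-a)^3
      = (1-a)^2*((1/2-(2*t^2+3*t-2)/(6*t^2))+((2*t^2+3*t-2)/(6*t^2))*a) := by ring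
    _ ≤ 1/(54*((2*t^2+3*t-2)/(6*t^2))^2) := h
    _ = 2*t^4 / (3*(2*t^2 + 3*t - 2)^2) := hr
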